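/- arXiv:0704.3096 — 2 statements merged into one kernel-verified Lean document; each statement's English description precedes it below -/
import Mathlib

section
/- Let Λ ⊆ ℂ be a lattice, i.e. a ℤ-submodule generated by two complex numbers that are linearly independent over ℝ. If ζ ∈ ℂ satisfies ζ·Λ ⊆ Λ and ζ has finite multiplicative order n (ζ^n = 1 and n is minimal positive), then n ∈ {1, 2, 3, 4, 6}. -/
theorem crystallographic_restriction
    (a b : ℂ) (hab : LinearIndependent ℝ ![a, b])
    (Λ : Submodule ℤ ℂ) (hΛ : Λ = Submodule.span ℤ ({a, b} : Set ℂ))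
    (ζ : ℂ) (hmul : ∀ x ∈ Λ, ζ * x ∈ Λ)
    (n : ℕ) (hn : 0 < n) (hζ : ζ ^ n = 1)
    (hmin : ∀ k : ℕ, 0 < k → ζ ^ k = 1 → n ≤ k) :
    n ∈ ({1, 2, 3, 4, 6} : Set ℕ) := by
  subst hΛ
  have ha0 : a ≠ 0 := by simpa using hab.ne_zero 0
  have haΛ : a ∈ Submodule.span ℤ ({a, b} : Set ℂ) := Submodule.subset_span (by simp)
  have hbΛ : b ∈ Submodule.span ℤ ({a, b} : Set ℂ) := Submodule.subset_span (by simp)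
  obtain ⟨p, q, h1⟩ := Submodule.mem_span_pair.mp (hmul a haΛ)
  obtain ⟨r, s, h2⟩ := Submodule.mem_span_pair.mp (hmul b hbΛ)
  simp only [zsmul_eq_mul] at h1 h2
  -- ζ satisfies an integer quadratic
  have key : ζ ^ 2 - ((p : ℂ) + s) * ζ + ((p : ℂ) * s - q * r) = 0 := by
    have hca : (ζ ^ 2 - ((p : ℂ) + s) * ζ + ((p : ℂ) * s - q * r)) * a = 0 := by
      linear_combination ((s : ℂ) - ζ) * h1 - (q : ℂ) * h2
    exact (mul_eq_zero.mp hca).resolve_right ha0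
  -- |ζ| = 1
  have habs : ‖ζ‖ = 1 := by
    exact Complex.norm_eq_one_of_pow_eq_one hζ hn.ne'
  have hnsq : Complex.normSq ζ = 1 := by rw [← Complex.sq_norm, habs]; norm_num
  have hconj : ζ * (starRingEnd ℂ) ζ = 1 := by
    rw [Complex.mul_conj, hnsq, Complex.ofReal_one]
  -- divisibility from any root-of-unity equation
  have horder : ∀ m : ℕ, ζ ^ m = 1 → n ∣ m := by
    intro m hm
    have hfo : IsOfFinOrder ζ := isOfFinOrder_iff_pow_eq_one.mpr ⟨n, hn, hζ⟩
    have hd1 : orderOf ζ ∣ n := orderOf_dvd_of_pow_eq_one hζ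
    have hd2 : n ≤ orderOf ζ := hmin _ hfo.orderOf_pos (pow_orderOf_eq_one ζ)
    have : orderOf ζ = n := le_antisymm (Nat.le_of_dvd hn hd1) hd2
    exact this ▸ orderOf_dvd_of_pow_eq_one hm
  have finish : ∀ m : ℕ, 0 < m → m ∣ 12 → m ≤ 6 → ζ ^ m = 1 →
      n ∈ ({1, 2, 3, 4, 6} : Set ℕ) := by
    intro m hm0 hm12 hm6 hpow
    have hd := horder m hpow
    have h12 : n ∣ 12 := hd.trans hm12
    have h6 : n ≤ 6 := (Nat.le_of_dvd hm0 hd).trans hm6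
    simp only [Set.mem_insert_iff, Set.mem_singleton_iff]
    interval_cases n <;> omega
  -- conjugate of the quadratic
  have hconj2 : ((starRingEnd ℂ) ζ) ^ 2 - ((p : ℂ) + s) * ((starRingEnd ℂ) ζ)
      + ((p : ℂ) * s - q * r) = 0 := by
    have := congrArg (starRingEnd ℂ) key
    simpa [map_pow, map_mul, map_sub, map_add, map_intCast] using this
  have hsplit : (ζ - (starRingEnd ℂ) ζ) * (ζ + (starRingEnd ℂ) ζ - ((p : ℂ) + s)) = 0 := by
    linear_combination key - hconj2
  rcases mul_eq_zero.mp hsplit with hreal | hT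
  · -- ζ is real, so ζ = ±1
    have hceq : ζ = (starRingEnd ℂ) ζ := sub_eq_zero.mp hreal
    have : ζ ^ 2 = 1 := by rw [sq]; nth_rewrite 2 [hceq]; exact hconj
    exact finish 2 (by norm_num) (by norm_num) (by norm_num) this
  · have hT' : ζ + (starRingEnd ℂ) ζ = ((p : ℂ) + s) := sub_eq_zero.mp hT
    -- trace bound
    have htre : ((p + s : ℤ) : ℝ) = 2 * ζ.re := by
      have := hT'
      rw [Complex.add_conj] at this
      exact_mod_cast congrArg Complex.re this.symm
    have hbound : |ζ.re| ≤ 1 := habs ▸ Complex.abs_re_le_norm ζ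
    have hb : -2 ≤ p + s ∧ p + s ≤ 2 := by
      rw [abs_le] at hbound
      constructor <;> [exact_mod_cast (by linarith [htre] : (-2 : ℝ) ≤ ((p + s : ℤ) : ℝ));
        exact_mod_cast (by linarith [htre] : ((p + s : ℤ) : ℝ) ≤ 2)]
    have key2 : ζ ^ 2 - ((p : ℂ) + s) * ζ + 1 = 0 := by
      linear_combination ζ * hT' - hconj
    have hcases : p + s = -2 ∨ p + s = -1 ∨ p + s = 0 ∨ p + s = 1 ∨ p + s = 2 := by omega
    rcases hcases with h | h | h | h | h <;>
      (rw [show ((p : ℂ) + s) = ((p + s : ℤ) : ℂ) by push_cast; ring, h] at key2; push_cast at key2)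
    · -- ζ = -1
      have hz : (ζ + 1) ^ 2 = 0 := by linear_combination key2
      have : ζ = -1 := by
        have h' := pow_eq_zero_iff (n := 2) (by norm_num) |>.mp hz
        linear_combination h'
      exact finish 2 (by norm_num) (by norm_num) (by norm_num) (by rw [this]; norm_num)
    · exact finish 3 (by norm_num) (by norm_num) (by norm_num)
        (by linear_combination (ζ - 1) * key2)
    · exact finish 4 (by norm_num) (by norm_num) (by norm_num)
        (by linear_combination (ζ ^ 2 - 1) * key2)
    · exact finish 6 (by norm_num) (by norm_num) (by norm_num)
        (by linear_combination (ζ ^ 4 + ζ ^ 3 - ζ - 1) * key2)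
    · -- ζ = 1
      have hz : (ζ - 1) ^ 2 = 0 := by linear_combination key2
      have : ζ = 1 := by
        have h' := pow_eq_zero_iff (n := 2) (by norm_num) |>.mp hz
        linear_combination h'
      exact finish 1 (by norm_num) (by norm_num) (by norm_num) (by rw [this]; norm_num)
end

section
/- Let A be an additive abelian group, α : A ≃+ A an automorphism of exact (finite) order m, and ξ ∈ A. Set P_m(ξ) = ∑_{i=0}^{m-1} α^i(ξ), and suppose P_m(ξ) has finite additive order d. Then the affine bijection τ(x) = ξ + α(x) has exact order m·d in the group of bijections of A. -/
theorem affine_order {A : Type*} [AddCommGroup A] (α : AddAut A) (m : ℕ)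
    (hm : 0 < m) (hord : addOrderOf α = m) (ξ : A) (d : ℕ) (hd : 0 < d)
    (hdo : addOrderOf (∑ i ∈ Finset.range m, (i • α) ξ) = d) :
    orderOf ((α.toEquiv.trans (Equiv.addLeft ξ)) : Equiv.Perm A) = m * d := by
  set P : ℕ → A := fun j => ∑ i ∈ Finset.range j, (i • α) ξ with hP
  set τ : Equiv.Perm A := α.toEquiv.trans (Equiv.addLeft ξ) with hτ
  have hαm : m • α = 0 := by rw [← hord]; exact addOrderOf_nsmul_eq_zero α
  have key : ∀ j x, (τ ^ j) x = P j + (j • α) x := by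
    intro j
    induction j with
    | zero => intro x; simp [P]
    | succ j ih =>
      intro x
      rw [pow_succ, Equiv.Perm.mul_apply, ih]
      have hτx : τ x = ξ + α x := rfl
      rw [hτx, map_add]
      simp only [P, Finset.sum_range_succ, succ_nsmul, AddAut.add_apply]
      rw [add_assoc]
  have hPmul : ∀ k, P (m * k) = k • P m := by
    intro k
    induction k with
    | zero => simp [P]
    | succ k ih =>
      have hmk : m * (k + 1) = m * k + m := by ring
      rw [hmk]
      have hsplit : P (m * k + m) = P (m * k) + P m := by
        simp only [P, Finset.sum_range_add]
        congr 1
        apply Finset.sum_congr rfl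
        intro i _
        congr 1
        rw [add_nsmul, mul_nsmul, hαm, nsmul_zero, zero_add]
      rw [hsplit, ih, succ_nsmul]
  have htop : τ ^ (m * d) = 1 := by
    ext x
    rw [key]
    have h1 : P (m * d) = 0 := by
      rw [hPmul, ← hdo]
      exact addOrderOf_nsmul_eq_zero _
    have h2 : (m * d) • α = 0 := by rw [mul_nsmul, hαm, nsmul_zero]
    simp [h1, h2]
  have hdvd : ∀ j, τ ^ j = 1 → m * d ∣ j := by
    intro j hj
    have happ : ∀ x : A, P j + (j • α) x = x := by
      intro x
      rw [← key, hj]; rfl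
    have h0 : P j = 0 := by
      have := happ 0
      simpa using this
    have hαj : j • α = 0 := by
      ext x
      have := happ x
      rw [h0, zero_add] at this
      simpa using this
    have hmj : m ∣ j := hord ▸ addOrderOf_dvd_of_nsmul_eq_zero hαj
    obtain ⟨k, rfl⟩ := hmj
    rw [hPmul] at h0
    have hdk : d ∣ k := by
      rw [← hdo]
      exact (addOrderOf_dvd_iff_nsmul_eq_zero).mpr h0
    exact mul_dvd_mul_left m hdk
  exact Nat.dvd_antisymm (orderOf_dvd_of_pow_eq_one htop)
    (hdvd (orderOf τ) (pow_orderOf_eq_one τ))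
end
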